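/- Let p ≥ 1 and let [ℓ_1,u_1),…,[ℓ_p,u_p) be nonempty half-open real intervals sorted so that ℓ_1 ≤ … ≤ ℓ_p. Suppose 1 = b_1 < b_2 < … < b_{k+1} = p+1 are indices such that for every j ∈ {1,…,k} the block intersection ⋂_{b_j ≤ g < b_{j+1}} [ℓ_g, u_g) is nonempty, and for every j ∈ {1,…,k−1} one has ℓ_{b_{j+1}} ≥ min_{b_j ≤ g < b_{j+1}} u_g. Then the piercing number of the family equals k, and for any choice of points s_j ∈ ⋂_{b_j ≤ g < b_{j+1}} [ℓ_g, u_g) (j = 1,…,k), the set {s_1,…,s_k} is a minimum-cardinality piercing set of the family. -/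
import Mathlib

/-- Given sorted nonempty half-open intervals `[ℓ h, u h)` for `h = 1,…,p` and block
boundaries `1 = b 1 < b 2 < … < b (k+1) = p+1` such that each block has nonempty
intersection and `ℓ (b (j+1)) ≥ min_{b j ≤ g < b (j+1)} u g` between consecutive
blocks, the piercing number of the family equals `k`, and any choice of points
`s j` in the block intersections gives a minimum-cardinality piercing set
`{s 1, …, s k}` (it pierces the family and has exactly `k` elements). -/
theorem min_intset_blocks
    (p : ℕ) (hp : 1 ≤ p) (ℓ u : ℕ → ℝ)
    (hne : ∀ h, 1 ≤ h → h ≤ p → ℓ h < u h)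
    (hsorted : ∀ h, 1 ≤ h → h < p → ℓ h ≤ ℓ (h + 1))
    (b : ℕ → ℕ) (k : ℕ)
    (hb1 : b 1 = 1) (hbk1 : b (k + 1) = p + 1)
    (hmono : ∀ j, 1 ≤ j → j ≤ k → b j < b (j + 1))
    (hblock : ∀ j, 1 ≤ j → j ≤ k →
      (⋂ g ∈ Set.Ico (b j) (b (j + 1)), Set.Ico (ℓ g) (u g)).Nonempty)
    (hsep : ∀ j, 1 ≤ j → j ≤ k - 1 →
      sInf (u '' Set.Ico (b j) (b (j + 1))) ≤ ℓ (b (j + 1))) :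
    sInf {n | ∃ S : Finset ℝ, S.card = n ∧
        ∀ h, 1 ≤ h → h ≤ p → ∃ x ∈ S, x ∈ Set.Ico (ℓ h) (u h)} = k ∧
    ∀ s : ℕ → ℝ,
      (∀ j, 1 ≤ j → j ≤ k →
        s j ∈ ⋂ g ∈ Set.Ico (b j) (b (j + 1)), Set.Ico (ℓ g) (u g)) →
      (∀ h, 1 ≤ h → h ≤ p →
        ∃ x ∈ (Finset.Icc 1 k).image s, x ∈ Set.Ico (ℓ h) (u h)) ∧
      ((Finset.Icc 1 k).image s).card = k := by
  -- k ≥ 1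
  have hk1 : 1 ≤ k := by
    rcases Nat.eq_zero_or_pos k with h | h
    · subst h; rw [hb1] at hbk1; omega
    · exact h
  -- b monotone on [1, k+1]
  have hbmono : ∀ i j, 1 ≤ i → i ≤ j → j ≤ k + 1 → b i ≤ b j := by
    intro i j hi hij hj
    induction j with
    | zero => omega
    | succ n ih =>
      rcases eq_or_lt_of_le hij with heq | hlt
      · exact le_of_eq (congrArg b heq)
      · have h1 : b i ≤ b n := ih (by omega) (by omega)
        have h2 : b n < b (n + 1) := hmono n (by omega) (by omega)
        omega
  have hbstrict : ∀ i j, 1 ≤ i → i < j → j ≤ k + 1 → b i < b j := by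
    intro i j hi hij hj
    have h1 : b i ≤ b (j - 1) := hbmono i (j - 1) hi (by omega) (by omega)
    have h2 : b (j - 1) < b (j - 1 + 1) := hmono (j - 1) (by omega) (by omega)
    have h3 : j - 1 + 1 = j := by omega
    rw [h3] at h2; omega
  have hbge1 : ∀ j, 1 ≤ j → j ≤ k + 1 → 1 ≤ b j := by
    intro j hj hj'
    have := hbmono 1 j le_rfl hj hj'
    omega
  have hblep : ∀ j, 1 ≤ j → j ≤ k → b j ≤ p := by
    intro j hj hj'
    have := hbstrict j (k + 1) hj (by omega) le_rfl
    omega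
  -- ℓ monotone
  have hlmono : ∀ g g', 1 ≤ g → g ≤ g' → g' ≤ p → ℓ g ≤ ℓ g' := by
    intro g g' h1 h2 h3
    induction g' with
    | zero => omega
    | succ n ih =>
      rcases eq_or_lt_of_le h2 with heq | hlt
      · exact le_of_eq (congrArg ℓ heq)
      · exact le_trans (ih (by omega) (by omega)) (hsorted n (by omega) (by omega))
  -- minimizer of u on each block
  have hmin : ∀ j, 1 ≤ j → j ≤ k → ∃ g, b j ≤ g ∧ g < b (j + 1) ∧
      u g = sInf (u '' Set.Ico (b j) (b (j + 1))) := by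
    intro j hj1 hjk
    have hfin : (u '' Set.Ico (b j) (b (j + 1))).Finite := (Set.finite_Ico _ _).image u
    have hne' : (u '' Set.Ico (b j) (b (j + 1))).Nonempty :=
      ⟨u (b j), ⟨b j, ⟨le_refl _, hmono j hj1 hjk⟩, rfl⟩⟩
    obtain ⟨g, hg, hgu⟩ := hne'.csInf_mem hfin
    exact ⟨g, hg.1, hg.2, hgu⟩
  have hinf_le : ∀ j, 1 ≤ j → j ≤ k → ∀ g, b j ≤ g → g < b (j + 1) →
      sInf (u '' Set.Ico (b j) (b (j + 1))) ≤ u g := by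
    intro j hj1 hjk g h1 h2
    exact csInf_le ((Set.finite_Ico _ _).image u).bddBelow ⟨g, ⟨h1, h2⟩, rfl⟩
  -- locate the block of an index h
  have hloc : ∀ h, 1 ≤ h → h ≤ p → ∃ j, 1 ≤ j ∧ j ≤ k ∧ b j ≤ h ∧ h < b (j + 1) := by
    intro h h1 h2
    set j := Nat.findGreatest (fun j => b j ≤ h) k with hjdef
    have hP1 : (fun j => b j ≤ h) 1 := by show b 1 ≤ h; rw [hb1]; exact h1
    have hPj : b j ≤ h := Nat.findGreatest_spec (P := fun j => b j ≤ h) hk1 hP1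
    have hj1 : 1 ≤ j := Nat.le_findGreatest (P := fun j => b j ≤ h) hk1 hP1
    have hjk : j ≤ k := Nat.findGreatest_le (P := fun j => b j ≤ h) k
    refine ⟨j, hj1, hjk, hPj, ?_⟩
    rcases eq_or_lt_of_le hjk with heq | hlt
    · rw [heq, hbk1]; omega
    · have hng : ¬ b (j + 1) ≤ h :=
        Nat.findGreatest_is_greatest (P := fun j => b j ≤ h) (n := k) (k := j + 1)
          (Nat.lt_succ_self j) hlt
      omega
  -- key separation
  have hkey : ∀ i j (x y : ℝ), 1 ≤ i → i < j → j ≤ k →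
      x < sInf (u '' Set.Ico (b i) (b (i + 1))) →
      (∃ g, b j ≤ g ∧ g < b (j + 1) ∧ ℓ g ≤ y) → x < y := by
    intro i j x y hi hij hj hx ⟨g, hg1, hg2, hg3⟩
    have h1 : sInf (u '' Set.Ico (b i) (b (i + 1))) ≤ ℓ (b (i + 1)) :=
      hsep i hi (by omega)
    have hbi1 : 1 ≤ b (i + 1) := hbge1 (i + 1) (by omega) (by omega)
    have hbij : b (i + 1) ≤ b j := hbmono (i + 1) j (by omega) (by omega) (by omega)
    have hgp : g ≤ p := by
      have := hbmono (j + 1) (k + 1) (by omega) (by omega) le_rfl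
      rw [hbk1] at this; omega
    have h2 : ℓ (b (i + 1)) ≤ ℓ g := hlmono (b (i + 1)) g hbi1 (by omega) hgp
    linarith
  -- main lemma for chosen block points
  have hmain : ∀ s : ℕ → ℝ,
      (∀ j, 1 ≤ j → j ≤ k →
        s j ∈ ⋂ g ∈ Set.Ico (b j) (b (j + 1)), Set.Ico (ℓ g) (u g)) →
      (∀ h, 1 ≤ h → h ≤ p →
        ∃ x ∈ (Finset.Icc 1 k).image s, x ∈ Set.Ico (ℓ h) (u h)) ∧
      ((Finset.Icc 1 k).image s).card = k := by
    intro s hs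
    have hs' : ∀ j, 1 ≤ j → j ≤ k → ∀ g, b j ≤ g → g < b (j + 1) →
        ℓ g ≤ s j ∧ s j < u g := by
      intro j h1 h2 g hg1 hg2
      have := hs j h1 h2
      simp only [Set.mem_iInter, Set.mem_Ico] at this
      exact this g ⟨hg1, hg2⟩
    have hlt : ∀ i j, 1 ≤ i → i < j → j ≤ k → s i < s j := by
      intro i j h1 h2 h3
      obtain ⟨g0, hg01, hg02, hg03⟩ := hmin i h1 (by omega)
      refine hkey i j (s i) (s j) h1 h2 h3 (by
        rw [← hg03]; exact (hs' i h1 (by omega) g0 hg01 hg02).2) ?_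
      refine ⟨b j, le_rfl, hmono j (by omega) h3, ?_⟩
      exact (hs' j (by omega) h3 (b j) le_rfl (hmono j (by omega) h3)).1
    constructor
    · intro h h1 h2
      obtain ⟨j, hj1, hj2, hj3, hj4⟩ := hloc h h1 h2
      refine ⟨s j, Finset.mem_image_of_mem s (Finset.mem_Icc.mpr ⟨hj1, hj2⟩), ?_⟩
      have := hs' j hj1 hj2 h hj3 hj4
      exact Set.mem_Ico.mpr this
    · rw [Finset.card_image_of_injOn, Nat.card_Icc]
      · omega
      · intro i hi j hj hij
        simp only [Finset.coe_Icc, Set.mem_Icc] at hi hj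
        by_contra hne'
        rcases lt_trichotomy i j with h | h | h
        · exact absurd hij (ne_of_lt (hlt i j hi.1 h hj.2))
        · exact hne' h
        · exact absurd hij.symm (ne_of_lt (hlt j i hj.1 h hi.2))
  constructor
  · -- sInf = k
    have hkmem : k ∈ {n | ∃ S : Finset ℝ, S.card = n ∧
        ∀ h, 1 ≤ h → h ≤ p → ∃ x ∈ S, x ∈ Set.Ico (ℓ h) (u h)} := by
      classical
      set s : ℕ → ℝ := fun j => if hj : 1 ≤ j ∧ j ≤ k then (hblock j hj.1 hj.2).choose else 0
        with hsdef
      have hs : ∀ j, 1 ≤ j → j ≤ k →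
          s j ∈ ⋂ g ∈ Set.Ico (b j) (b (j + 1)), Set.Ico (ℓ g) (u g) := by
        intro j h1 h2
        rw [hsdef]
        simp only [dif_pos (And.intro h1 h2)]
        exact (hblock j h1 h2).choose_spec
      obtain ⟨hpierce, hcard⟩ := hmain s hs
      exact ⟨(Finset.Icc 1 k).image s, hcard, hpierce⟩
    have hlb : ∀ n ∈ {n | ∃ S : Finset ℝ, S.card = n ∧
        ∀ h, 1 ≤ h → h ≤ p → ∃ x ∈ S, x ∈ Set.Ico (ℓ h) (u h)}, k ≤ n := by
      rintro n ⟨S, hScard, hS⟩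
      classical
      -- for each block j, a point of S in the minimizing interval of block j
      have hpick : ∀ j, 1 ≤ j → j ≤ k → ∃ x ∈ S, ∃ g, b j ≤ g ∧ g < b (j + 1) ∧
          x ∈ Set.Ico (ℓ g) (u g) ∧ u g = sInf (u '' Set.Ico (b j) (b (j + 1))) := by
        intro j h1 h2
        obtain ⟨g, hg1, hg2, hg3⟩ := hmin j h1 h2
        have hg1' : 1 ≤ g := le_trans (hbge1 j h1 (by omega)) hg1
        have hgp : g ≤ p := by
          have := hbmono (j + 1) (k + 1) (by omega) (by omega) le_rfl
          rw [hbk1] at this; omega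
        obtain ⟨x, hxS, hx⟩ := hS g hg1' hgp
        exact ⟨x, hxS, g, hg1, hg2, hx, hg3⟩
      set f : ℕ → ℝ := fun j => if hj : 1 ≤ j ∧ j ≤ k then (hpick j hj.1 hj.2).choose else 0
        with hfdef
      have hf : ∀ j (h1 : 1 ≤ j) (h2 : j ≤ k), f j ∈ S ∧ ∃ g, b j ≤ g ∧ g < b (j + 1) ∧
          f j ∈ Set.Ico (ℓ g) (u g) ∧ u g = sInf (u '' Set.Ico (b j) (b (j + 1))) := by
        intro j h1 h2
        rw [hfdef]
        simp only [dif_pos (And.intro h1 h2)]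
        exact ⟨(hpick j h1 h2).choose_spec.1, (hpick j h1 h2).choose_spec.2⟩
      have hflt : ∀ i j, 1 ≤ i → i < j → j ≤ k → f i < f j := by
        intro i j h1 h2 h3
        obtain ⟨_, gi, hgi1, hgi2, hgi3, hgi4⟩ := hf i h1 (by omega)
        obtain ⟨_, gj, hgj1, hgj2, hgj3, _⟩ := hf j (by omega) h3
        exact hkey i j (f i) (f j) h1 h2 h3 (by rw [← hgi4]; exact hgi3.2)
          ⟨gj, hgj1, hgj2, hgj3.1⟩
      have hsub : (Finset.Icc 1 k).image f ⊆ S := by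
        intro x hx
        simp only [Finset.mem_image, Finset.mem_Icc] at hx
        obtain ⟨j, ⟨h1, h2⟩, rfl⟩ := hx
        exact (hf j h1 h2).1
      have hinj : ((Finset.Icc 1 k).image f).card = k := by
        rw [Finset.card_image_of_injOn, Nat.card_Icc]
        · omega
        · intro i hi j hj hij
          simp only [Finset.coe_Icc, Set.mem_Icc] at hi hj
          by_contra hne'
          rcases lt_trichotomy i j with h | h | h
          · exact absurd hij (ne_of_lt (hflt i j hi.1 h hj.2))
          · exact hne' h
          · exact absurd hij.symm (ne_of_lt (hflt j i hj.1 h hi.2))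
      calc k = ((Finset.Icc 1 k).image f).card := hinj.symm
        _ ≤ S.card := Finset.card_le_card hsub
        _ = n := hScard
    exact le_antisymm (Nat.sInf_le hkmem) (le_csInf ⟨k, hkmem⟩ hlb)
  · exact hmain
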